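/- (Example 3, fractional Liu system, stable manifold formula.) Let 0 < p < 1 and let A be the 3×3 diagonal matrix diag(−1, 5/2, −5) (stable eigenvalues −1 and −5, unstable eigenvalue 5/2); let f(x₁,x₂,x₃) := (0, −4 x₁ x₃, 0); let π_s(x₁,x₂,x₃) = (x₁,0,x₃) and π_u(x₁,x₂,x₃) = (0,x₂,0). Let σ = (σ₁,0,σ₃) and let x : [0,∞) → ℂ³ be a bounded continuous fixed point of T_σ (with the integrand τ ↦ (p/τ) B̃(−τ) π_u f(x(τ)) Bochner integrable on (0,∞)). Then x₁(t) = E_p(−t^p) σ₁ and x₃(t) = E_p(−5 t^p) σ₃ for all t ≥ 0, and the second coordinate at time 0 satisfies x₂(0) = 4 · (5/2)^{1/p − 1} · σ₁ σ₃ · ∫_0^∞ e^{−(5/2)^{1/p} τ} E_p(−τ^p) E_p(−5 τ^p) dτ. -/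

import Mathlib

open MeasureTheory

noncomputable def mlE (p β : ℝ) (z : ℂ) : ℂ :=
  ∑' k : ℕ, z ^ k / Complex.Gamma ((p * k + β : ℝ) : ℂ)

noncomputable def psiT (p : ℝ) (m : ℕ) (t : ℝ) (lam : ℂ) : ℂ :=
  (1 / (m.factorial : ℂ)) *
    iteratedDeriv (m + 1) (fun z : ℂ => Complex.exp ((t : ℂ) * z ^ (1 / (p : ℂ)))) lam

noncomputable def mlEM {ι : Type*} [Fintype ι] [DecidableEq ι] (p β : ℝ) (M : Matrix ι ι ℂ) :
    Matrix ι ι ℂ :=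
  ∑' k : ℕ, (Complex.Gamma ((p * k + β : ℝ) : ℂ))⁻¹ • M ^ k

noncomputable def mvE {ι : Type*} [Fintype ι] [DecidableEq ι] (M : Matrix ι ι ℂ)
    (v : EuclideanSpace ℂ ι) : EuclideanSpace ℂ ι :=
  Matrix.toEuclideanLin M v

def BC {E : Type*} [NormedAddCommGroup E] (x : ℝ → E) : Prop :=
  ContinuousOn x (Set.Ici 0) ∧ ∃ C, ∀ t : ℝ, 0 ≤ t → ‖x t‖ ≤ C

/-- the matrix of the fractional Liu example: `diag(-1, 5/2, -5)`. -/
noncomputable def A19 : Matrix (Fin 3) (Fin 3) ℂ := !![-1, 0, 0; 0, 5/2, 0; 0, 0, -5]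

/-- the matrix `B̃(t)` of the Liu example: `diag(0, Ψ̃₀(t,5/2), 0)`. -/
noncomputable def Bt19 (p : ℝ) (t : ℝ) : Matrix (Fin 3) (Fin 3) ℂ :=
  !![0, 0, 0; 0, psiT p 0 t (5/2), 0; 0, 0, 0]

/-- the nonlinearity `f(x₁,x₂,x₃) = (0, -4x₁x₃, 0)` of the Liu example. -/
noncomputable def f19 (v : EuclideanSpace ℂ (Fin 3)) : EuclideanSpace ℂ (Fin 3) :=
  (WithLp.equiv 2 (Fin 3 → ℂ)).symm ![0, -4 * v 0 * v 2, 0]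

/-- the unstable projection `π_u(x₁,x₂,x₃) = (0,x₂,0)`. -/
noncomputable def piu19 (v : EuclideanSpace ℂ (Fin 3)) : EuclideanSpace ℂ (Fin 3) :=
  (WithLp.equiv 2 (Fin 3 → ℂ)).symm ![0, v 1, 0]

/-- the operator `T_σ` of the Liu example. -/
noncomputable def T19 (p : ℝ) (σ : EuclideanSpace ℂ (Fin 3)) (x : ℝ → EuclideanSpace ℂ (Fin 3))
    (t : ℝ) : EuclideanSpace ℂ (Fin 3) :=
  mvE (mlEM p 1 (((t ^ p : ℝ) : ℂ) • A19)) σ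
    + mvE (mlEM p 1 (((t ^ p : ℝ) : ℂ) • A19))
        (∫ τ in Set.Ioi (0 : ℝ), (p / τ) • mvE (Bt19 p (-τ)) (piu19 (f19 (x τ))))
    + ∫ τ in Set.Ioc (0 : ℝ) t,
        ((t - τ) ^ (p - 1)) • mvE (mlEM p p ((((t - τ) ^ p : ℝ) : ℂ) • A19)) (f19 (x τ))

lemma summable_ml (p β : ℝ) (hp : 0 < p) (hβ : 0 < β) (z : ℂ) :
    Summable (fun k : ℕ => (Complex.Gamma ((p * k + β : ℝ) : ℂ))⁻¹ * z ^ k) := by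
  obtain ⟨m, hm0, hm4⟩ : ∃ m : ℕ, 0 < m ∧ 4 ≤ p * m := by
    obtain ⟨m, hm⟩ := exists_nat_ge (4 / p)
    refine ⟨m + 1, Nat.succ_pos m, ?_⟩
    have h1 : (4:ℝ)/p ≤ (m:ℝ) + 1 := by linarith
    have := (div_le_iff₀ hp).mp h1
    push_cast
    linarith [this]
  set R : ℝ := max ‖z‖ 2 with hR
  have hR2 : (2:ℝ) ≤ R := le_max_right _ _
  set Q : ℝ := R ^ m with hQ
  have hQ1 : (1:ℝ) < Q := by
    calc (1:ℝ) < 2 ^ m := one_lt_pow₀ (by norm_num) (by omega)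
      _ ≤ R ^ m := pow_le_pow_left₀ (by norm_num) hR2 m
  have hQ0 : (0:ℝ) < Q := lt_trans one_pos hQ1
  set r : ℝ := Q ^ (-(1:ℝ)/m) with hr
  have hr0 : 0 ≤ r := Real.rpow_nonneg hQ0.le _
  have hr1 : r < 1 := Real.rpow_lt_one_of_one_lt_of_neg hQ1 (by
    apply div_neg_of_neg_of_pos <;> [norm_num; exact_mod_cast hm0])
  apply Summable.of_norm_bounded_eventually_nat (g := fun k => (Real.exp Q * Q) * r ^ k)
  · exact (summable_geometric_of_lt_one hr0 hr1).mul_left _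
  · filter_upwards [Filter.eventually_ge_atTop m] with k hk
    set j : ℕ := k / m with hj
    have hj1 : 1 ≤ j := (Nat.one_le_div_iff hm0).mpr hk
    have hdm := Nat.div_add_mod k m
    have hmod := Nat.mod_lt k hm0
    have hklt : k < m * (j + 1) := by
      rw [Nat.mul_succ, hj]
      omega
    have hjk : m * j ≤ k := by rw [hj]; omega
    have hkle : (k:ℝ) ≤ m * ((j:ℝ) + 1) := by exact_mod_cast hklt.le
    have hjkR : (m:ℝ) * j ≤ k := by exact_mod_cast hjk
    have hx4 : 4 * (j:ℝ) ≤ p * k := by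
      calc 4 * (j:ℝ) ≤ (p * m) * j := by
            have : (0:ℝ) ≤ (j:ℝ) := Nat.cast_nonneg _
            nlinarith
        _ = p * ((m:ℝ) * j) := by ring
        _ ≤ p * k := by nlinarith
    have hx2 : ((2*j+1 : ℕ):ℝ) + 1 ≤ p * k + β := by
      push_cast
      have : (1:ℝ) ≤ j := by exact_mod_cast hj1
      linarith
    -- Gamma bound
    have hΓ : (Nat.factorial (2*j+1) : ℝ) ≤ Real.Gamma (p * k + β) := by
      rw [← Real.Gamma_nat_eq_factorial]
      have h2 : ((2*j+1 : ℕ):ℝ) + 1 ∈ Set.Ici (2:ℝ) := by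
        simp only [Set.mem_Ici]; push_cast
        have : (1:ℝ) ≤ j := by exact_mod_cast hj1
        linarith
      have h3 : p * k + β ∈ Set.Ici (2:ℝ) := by
        simp only [Set.mem_Ici]
        have : (1:ℝ) ≤ j := by exact_mod_cast hj1
        linarith
      rcases eq_or_lt_of_le hx2 with h | h
      · rw [h]
      · exact (Real.Gamma_strictMonoOn_Ici h2 h3 h).le
    have hΓpos : 0 < Real.Gamma (p * k + β) := Real.Gamma_pos_of_pos (by positivity)
    -- norm of term
    have hnorm : ‖(Complex.Gamma ((p * k + β : ℝ) : ℂ))⁻¹ * z ^ k‖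
        = (Real.Gamma (p * k + β))⁻¹ * ‖z‖ ^ k := by
      rw [norm_mul, norm_inv, norm_pow, Complex.Gamma_ofReal, Complex.norm_real,
        Real.norm_of_nonneg hΓpos.le]
    rw [hnorm]
    -- chain
    have hfac : (0:ℝ) < (Nat.factorial (2*j+1) : ℝ) := by positivity
    have step1 : (Real.Gamma (p * k + β))⁻¹ * ‖z‖ ^ k ≤ Q^(j+1) / (Nat.factorial (2*j+1) : ℝ) := by
      have hz : ‖z‖ ^ k ≤ Q ^ (j+1) := by
        calc ‖z‖ ^ k ≤ R ^ k := pow_le_pow_left₀ (norm_nonneg _) (le_max_left _ _) k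
          _ ≤ R ^ (m * (j+1)) := pow_le_pow_right₀ (by linarith) hklt.le
          _ = Q ^ (j+1) := by rw [pow_mul]
      have h1 : (Real.Gamma (p * k + β))⁻¹ ≤ ((Nat.factorial (2*j+1) : ℝ))⁻¹ :=
        inv_anti₀ hfac hΓ
      calc (Real.Gamma (p * k + β))⁻¹ * ‖z‖ ^ k
          ≤ ((Nat.factorial (2*j+1) : ℝ))⁻¹ * Q^(j+1) := by
            apply mul_le_mul h1 hz (by positivity) (by positivity)
        _ = Q^(j+1) / (Nat.factorial (2*j+1) : ℝ) := by ring
    have step2 : Q^(j+1) / (Nat.factorial (2*j+1) : ℝ) ≤ Real.exp Q / Q ^ j := by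
      have hexp : Q ^ (2*j+1) / (Nat.factorial (2*j+1) : ℝ) ≤ Real.exp Q := by
        refine le_trans ?_ (Real.sum_le_exp_of_nonneg hQ0.le (2*j+2))
        exact Finset.single_le_sum (f := fun i => Q ^ i / (Nat.factorial i : ℝ))
          (fun i _ => by positivity) (Finset.self_mem_range_succ (2*j+1))
      rw [div_le_div_iff₀ hfac (pow_pos hQ0 j)]
      have hpow : Q ^ (j+1) * Q ^ j = Q ^ (2*j+1) := by
        rw [← pow_add]; congr 1; omega
      rw [hpow]
      rw [div_le_iff₀ hfac] at hexp
      exact hexp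
    have hmR : (0:ℝ) < (m:ℝ) := by exact_mod_cast hm0
    have step3 : Real.exp Q / Q ^ j ≤ Real.exp Q * Q * r ^ k := by
      have he : -(j:ℝ) ≤ 1 - (k:ℝ)/m := by
        have : (k:ℝ)/m ≤ (j:ℝ)+1 := (div_le_iff₀ hmR).mpr (by linarith [hkle])
        linarith
      have h1 : Q ^ (-(j:ℝ)) ≤ Q ^ ((1:ℝ) - (k:ℝ)/m) :=
        Real.rpow_le_rpow_of_exponent_le hQ1.le he
      have h2 : Q ^ ((1:ℝ) - (k:ℝ)/m) = Q * r ^ k := by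
        rw [sub_eq_add_neg, Real.rpow_add hQ0, Real.rpow_one]
        congr 1
        rw [hr, ← Real.rpow_natCast (Q ^ (-1/(m:ℝ))) k, ← Real.rpow_mul hQ0.le]
        congr 1
        field_simp
      have h3 : Real.exp Q / Q ^ j = Real.exp Q * Q ^ (-(j:ℝ)) := by
        rw [Real.rpow_neg hQ0.le, Real.rpow_natCast, div_eq_mul_inv]
      rw [h3]
      calc Real.exp Q * Q ^ (-(j:ℝ)) ≤ Real.exp Q * (Q * r ^ k) := by
            exact mul_le_mul_of_nonneg_left (h1.trans_eq h2) (Real.exp_nonneg Q)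
        _ = Real.exp Q * Q * r ^ k := by ring
    calc (Real.Gamma (p * k + β))⁻¹ * ‖z‖ ^ k ≤ Q^(j+1) / (Nat.factorial (2*j+1) : ℝ) := step1
      _ ≤ Real.exp Q / Q ^ j := step2
      _ ≤ Real.exp Q * Q * r ^ k := step3
lemma mlE_eq_tsum (p β : ℝ) (z : ℂ) :
    mlE p β z = ∑' k : ℕ, (Complex.Gamma ((p * k + β : ℝ) : ℂ))⁻¹ * z ^ k := by
  unfold mlE; exact tsum_congr fun k => by rw [div_eq_mul_inv, mul_comm]

lemma mlEM_diagonal (p β : ℝ) (hp : 0 < p) (hβ : 0 < β) (d : Fin 3 → ℂ) :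
    mlEM p β (Matrix.diagonal d) = Matrix.diagonal (fun i => mlE p β (d i)) := by
  unfold mlEM
  have h1 : ∀ k : ℕ, (Complex.Gamma ((p * k + β : ℝ) : ℂ))⁻¹ • (Matrix.diagonal d) ^ k
      = Matrix.diagonal (fun i => (Complex.Gamma ((p * k + β : ℝ) : ℂ))⁻¹ * d i ^ k) := by
    intro k
    rw [Matrix.diagonal_pow, ← Matrix.diagonal_smul]
    rfl
  have h2 : (∑' k : ℕ, fun i : Fin 3 => (Complex.Gamma ((p * k + β : ℝ) : ℂ))⁻¹ * d i ^ k)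
      = fun i => mlE p β (d i) := by
    funext i
    rw [tsum_apply (Pi.summable.mpr fun i => summable_ml p β hp hβ (d i)), mlE_eq_tsum]
  simp_rw [h1]
  rw [← Matrix.diagonal_tsum, h2]

lemma mvE_diag (d : Fin 3 → ℂ) (v : EuclideanSpace ℂ (Fin 3)) (i : Fin 3) :
    mvE (Matrix.diagonal d) v i = d i * v i := by
  simp [mvE, Matrix.toEuclideanLin_apply, Matrix.mulVec_diagonal]

lemma A19_diag : A19 = Matrix.diagonal ![-1, 5/2, -5] := by
  unfold A19
  ext i j
  fin_cases i <;> fin_cases j <;>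
    simp [Matrix.diagonal, Matrix.vecHead, Matrix.vecTail]

lemma Bt19_diag (p t : ℝ) : Bt19 p t = Matrix.diagonal ![0, psiT p 0 t (5/2), 0] := by
  unfold Bt19
  ext i j
  fin_cases i <;> fin_cases j <;>
    simp [Matrix.diagonal, Matrix.vecHead, Matrix.vecTail]

lemma smul_A19 (c : ℂ) : c • A19 = Matrix.diagonal ![-c, (5/2) * c, -5 * c] := by
  unfold A19
  ext i j
  fin_cases i <;> fin_cases j <;>
    simp [Matrix.diagonal, Matrix.vecHead, Matrix.vecTail] <;> ring
lemma psiT_val (p : ℝ) (hp0 : 0 < p) (t : ℝ) :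
    psiT p 0 t (5/2) = (t : ℂ) * (1/(p:ℂ)) * (5/2 : ℂ) ^ ((1:ℂ)/p - 1)
      * Complex.exp ((t:ℂ) * (5/2:ℂ) ^ ((1:ℂ)/p)) := by
  unfold psiT
  have hd : HasDerivAt (fun z : ℂ => Complex.exp ((t : ℂ) * z ^ (1 / (p:ℂ))))
      (Complex.exp ((t:ℂ) * (5/2:ℂ)^(1/(p:ℂ))) * ((t:ℂ) * ((1/(p:ℂ)) * (5/2:ℂ)^(1/(p:ℂ) - 1))))
      (5/2 : ℂ) := by
    have hmem : (5/2 : ℂ) ∈ Complex.slitPlane := by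
      rw [Complex.mem_slitPlane_iff]
      left
      norm_num
    have h1 : HasDerivAt (fun z : ℂ => z ^ (1/(p:ℂ)))
        ((1/(p:ℂ)) * (5/2:ℂ)^(1/(p:ℂ)-1)) (5/2:ℂ) :=
      (Complex.hasStrictDerivAt_cpow_const hmem).hasDerivAt
    exact (h1.const_mul (t:ℂ)).cexp
  rw [zero_add, iteratedDeriv_one, hd.deriv]
  simp only [Nat.factorial_zero, Nat.cast_one]
  ring

lemma mlE_zero (p : ℝ) : mlE p 1 0 = 1 := by
  unfold mlE
  rw [tsum_eq_single 0 (fun k hk => by simp [zero_pow hk])]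
  norm_num [Complex.Gamma_one]

lemma euclid_apply (w : Fin 3 → ℂ) (i : Fin 3) :
    ((WithLp.equiv 2 (Fin 3 → ℂ)).symm w) i = w i := rfl

lemma coord_integral_zero (F : ℝ → EuclideanSpace ℂ (Fin 3)) (μ : MeasureTheory.Measure ℝ)
    (i : Fin 3) (h : ∀ τ, F τ i = 0) : (∫ τ, F τ ∂μ) i = 0 := by
  by_cases hF : MeasureTheory.Integrable F μ
  · have h2 := (EuclideanSpace.proj (𝕜 := ℂ) i).integral_comp_comm hF
    rw [show (∫ τ, F τ ∂μ) i = (EuclideanSpace.proj (𝕜 := ℂ) i) (∫ τ, F τ ∂μ) from rfl, ← h2]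
    simp only [show ∀ v : EuclideanSpace ℂ (Fin 3),
      (EuclideanSpace.proj (𝕜 := ℂ) i) v = v i from fun _ => rfl]
    simp [h]
  · rw [MeasureTheory.integral_undef hF]
    rfl

lemma coord_integral (F : ℝ → EuclideanSpace ℂ (Fin 3)) (μ : MeasureTheory.Measure ℝ)
    (i : Fin 3) (hF : MeasureTheory.Integrable F μ) :
    (∫ τ, F τ ∂μ) i = ∫ τ, F τ i ∂μ := by
  have h2 := (EuclideanSpace.proj (𝕜 := ℂ) i).integral_comp_comm hF
  rw [show (∫ τ, F τ ∂μ) i = (EuclideanSpace.proj (𝕜 := ℂ) i) (∫ τ, F τ ∂μ) from rfl, ← h2]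
  rfl
lemma smul_coord (r : ℝ) (v : EuclideanSpace ℂ (Fin 3)) (i : Fin 3) :
    (r • v) i = (r : ℂ) * v i := by
  rw [show (r • v) i = r • (v i) from rfl, Complex.real_smul]

lemma F19_coord0 (p τ : ℝ) (v : EuclideanSpace ℂ (Fin 3)) :
    ((p/τ) • mvE (Bt19 p (-τ)) (piu19 (f19 v))) 0 = 0 := by
  rw [smul_coord, Bt19_diag, mvE_diag]
  simp

lemma F19_coord2 (p τ : ℝ) (v : EuclideanSpace ℂ (Fin 3)) :
    ((p/τ) • mvE (Bt19 p (-τ)) (piu19 (f19 v))) 2 = 0 := by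
  rw [smul_coord, Bt19_diag, mvE_diag]
  simp

lemma F19_coord1 (p τ : ℝ) (v : EuclideanSpace ℂ (Fin 3)) :
    ((p/τ) • mvE (Bt19 p (-τ)) (piu19 (f19 v))) 1
      = ((p/τ : ℝ) : ℂ) * (psiT p 0 (-τ) (5/2) * (-4 * v 0 * v 2)) := by
  rw [smul_coord, Bt19_diag, mvE_diag,
    show piu19 (f19 v) 1 = -4 * v 0 * v 2 from rfl]
  simp

lemma G19_coord0 (p s : ℝ) (hp0 : 0 < p) (c : ℝ) (v : EuclideanSpace ℂ (Fin 3)) :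
    (s • mvE (mlEM p p (((c : ℝ) : ℂ) • A19)) (f19 v)) 0 = 0 := by
  rw [smul_coord, smul_A19, mlEM_diagonal p p hp0 hp0, mvE_diag]
  rw [show f19 v 0 = 0 from rfl]
  ring

lemma G19_coord2 (p s : ℝ) (hp0 : 0 < p) (c : ℝ) (v : EuclideanSpace ℂ (Fin 3)) :
    (s • mvE (mlEM p p (((c : ℝ) : ℂ) • A19)) (f19 v)) 2 = 0 := by
  rw [smul_coord, smul_A19, mlEM_diagonal p p hp0 hp0, mvE_diag]
  rw [show f19 v 2 = 0 from rfl]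
  ring
theorem stmt_19 (p : ℝ) (hp0 : 0 < p) (hp1 : p < 1) (σ₁ σ₃ : ℂ)
    (x : ℝ → EuclideanSpace ℂ (Fin 3)) (hx : BC x)
    (hint : MeasureTheory.IntegrableOn
      (fun τ : ℝ => (p / τ) • mvE (Bt19 p (-τ)) (piu19 (f19 (x τ)))) (Set.Ioi 0))
    (hfix : ∀ t ≥ (0 : ℝ),
      T19 p ((WithLp.equiv 2 (Fin 3 → ℂ)).symm ![σ₁, 0, σ₃]) x t = x t) :
    (∀ t ≥ (0 : ℝ), x t 0 = mlE p 1 (-((t ^ p : ℝ) : ℂ)) * σ₁) ∧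
      (∀ t ≥ (0 : ℝ), x t 2 = mlE p 1 (-5 * ((t ^ p : ℝ) : ℂ)) * σ₃) ∧
      x 0 1 = 4 * (((5 / 2 : ℝ) ^ (1 / p - 1) : ℝ) : ℂ) * σ₁ * σ₃ *
        ∫ τ in Set.Ioi (0 : ℝ),
          ((Real.exp (-((5 / 2 : ℝ) ^ (1 / p)) * τ) : ℝ) : ℂ)
            * mlE p 1 (-((τ ^ p : ℝ) : ℂ)) * mlE p 1 (-5 * ((τ ^ p : ℝ) : ℂ)) := by
  set σv : EuclideanSpace ℂ (Fin 3) := (WithLp.equiv 2 (Fin 3 → ℂ)).symm ![σ₁, 0, σ₃] with hσv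
  set F : ℝ → EuclideanSpace ℂ (Fin 3) :=
    fun τ => (p / τ) • mvE (Bt19 p (-τ)) (piu19 (f19 (x τ))) with hFdef
  have hw0 : (∫ τ in Set.Ioi (0:ℝ), F τ) 0 = 0 :=
    coord_integral_zero F _ 0 (fun τ => F19_coord0 p τ (x τ))
  have hw2 : (∫ τ in Set.Ioi (0:ℝ), F τ) 2 = 0 :=
    coord_integral_zero F _ 2 (fun τ => F19_coord2 p τ (x τ))
  have hexp : ∀ (t : ℝ) (i : Fin 3),
      (T19 p σv x t) i
        = mlE p 1 ((![-((t^p : ℝ) : ℂ), (5/2) * ((t^p : ℝ) : ℂ), -5 * ((t^p : ℝ) : ℂ)]) i) * σv i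
          + mlE p 1 ((![-((t^p : ℝ) : ℂ), (5/2) * ((t^p : ℝ) : ℂ), -5 * ((t^p : ℝ) : ℂ)]) i)
              * (∫ τ in Set.Ioi (0:ℝ), F τ) i
          + (∫ τ in Set.Ioc (0:ℝ) t,
              ((t - τ) ^ (p - 1)) • mvE (mlEM p p ((((t - τ) ^ p : ℝ) : ℂ) • A19)) (f19 (x τ))) i := by
    intro t i
    unfold T19
    rw [PiLp.add_apply, PiLp.add_apply, smul_A19, mlEM_diagonal p 1 hp0 one_pos,
      mvE_diag, mvE_diag]
  have part1 : ∀ t ≥ (0:ℝ), x t 0 = mlE p 1 (-((t ^ p : ℝ) : ℂ)) * σ₁ := by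
    intro t ht
    rw [← hfix t ht, hexp t 0]
    have h3 : (∫ τ in Set.Ioc (0:ℝ) t,
        ((t - τ) ^ (p - 1)) • mvE (mlEM p p ((((t - τ) ^ p : ℝ) : ℂ) • A19)) (f19 (x τ))) 0 = 0 :=
      coord_integral_zero _ _ 0 (fun τ => G19_coord0 p _ hp0 _ (x τ))
    rw [hw0, h3]
    show mlE p 1 (-((t ^ p : ℝ) : ℂ)) * σ₁ + mlE p 1 (-((t ^ p : ℝ) : ℂ)) * 0 + 0 = _
    ring
  have part2 : ∀ t ≥ (0:ℝ), x t 2 = mlE p 1 (-5 * ((t ^ p : ℝ) : ℂ)) * σ₃ := by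
    intro t ht
    rw [← hfix t ht, hexp t 2]
    have h3 : (∫ τ in Set.Ioc (0:ℝ) t,
        ((t - τ) ^ (p - 1)) • mvE (mlEM p p ((((t - τ) ^ p : ℝ) : ℂ) • A19)) (f19 (x τ))) 2 = 0 :=
      coord_integral_zero _ _ 2 (fun τ => G19_coord2 p _ hp0 _ (x τ))
    rw [hw2, h3]
    show mlE p 1 (-5 * ((t ^ p : ℝ) : ℂ)) * σ₃ + mlE p 1 (-5 * ((t ^ p : ℝ) : ℂ)) * 0 + 0 = _
    ring
  refine ⟨part1, part2, ?_⟩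
  -- part 3
  have h0p : ((0:ℝ) ^ p : ℝ) = 0 := Real.zero_rpow hp0.ne'
  rw [← hfix 0 le_rfl, hexp 0 1]
  have h3 : (∫ τ in Set.Ioc (0:ℝ) 0,
      ((0 - τ) ^ (p - 1)) • mvE (mlEM p p ((((0 - τ) ^ p : ℝ) : ℂ) • A19)) (f19 (x τ))) 1 = 0 := by
    rw [Set.Ioc_self, MeasureTheory.Measure.restrict_empty, MeasureTheory.integral_zero_measure]
    rfl
  rw [h3]
  have hcoef : mlE p 1 ((![-(((0:ℝ)^p : ℝ) : ℂ), (5/2) * (((0:ℝ)^p : ℝ) : ℂ),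
      -5 * (((0:ℝ)^p : ℝ) : ℂ)]) 1) = 1 := by
    rw [show (![-(((0:ℝ)^p : ℝ) : ℂ), (5/2) * (((0:ℝ)^p : ℝ) : ℂ),
      -5 * (((0:ℝ)^p : ℝ) : ℂ)]) 1 = (5/2) * (((0:ℝ)^p : ℝ) : ℂ) from rfl, h0p]
    norm_num [mlE_zero]
  rw [hcoef]
  have hσv1 : σv 1 = 0 := rfl
  rw [hσv1]
  -- compute the Ioi integral coordinate
  have hw1 : (∫ τ in Set.Ioi (0:ℝ), F τ) 1 = ∫ τ in Set.Ioi (0:ℝ), F τ 1 :=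
    coord_integral F _ 1 hint
  rw [hw1]
  have hτcong : ∀ τ ∈ Set.Ioi (0:ℝ), F τ 1
      = (4 * (((5 / 2 : ℝ) ^ (1 / p - 1) : ℝ) : ℂ) * σ₁ * σ₃) *
        (((Real.exp (-((5 / 2 : ℝ) ^ (1 / p)) * τ) : ℝ) : ℂ)
          * mlE p 1 (-((τ ^ p : ℝ) : ℂ)) * mlE p 1 (-5 * ((τ ^ p : ℝ) : ℂ))) := by
    intro τ hτ
    have hτ0 : (0:ℝ) < τ := hτ
    have hτc : (τ:ℂ) ≠ 0 := by exact_mod_cast hτ0.ne'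
    have hpc : (p:ℂ) ≠ 0 := by exact_mod_cast hp0.ne'
    rw [show F τ 1 = ((p / τ) • mvE (Bt19 p (-τ)) (piu19 (f19 (x τ)))) 1 from rfl]
    rw [F19_coord1, psiT_val p hp0 (-τ), part1 τ hτ0.le, part2 τ hτ0.le]
    have hD : (((5 / 2 : ℝ) ^ (1 / p - 1) : ℝ) : ℂ) = (5/2 : ℂ) ^ ((1:ℂ)/p - 1) := by
      rw [Complex.ofReal_cpow (by norm_num : (0:ℝ) ≤ 5/2)]
      push_cast
      norm_num
    have hE : ((Real.exp (-((5 / 2 : ℝ) ^ (1 / p)) * τ) : ℝ) : ℂ)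
        = Complex.exp (((-τ : ℝ) : ℂ) * (5/2 : ℂ) ^ ((1:ℂ)/p)) := by
      rw [Complex.ofReal_exp]
      congr 1
      push_cast
      rw [Complex.ofReal_cpow (by norm_num : (0:ℝ) ≤ 5/2)]
      push_cast
      ring
    rw [hD, hE]
    push_cast
    field_simp
  rw [MeasureTheory.setIntegral_congr_fun measurableSet_Ioi hτcong]
  rw [MeasureTheory.integral_const_mul]
  ring
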